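/- Define sequences by x₀ = 2, y₀ = 7, x_{n+1} = 3x_n + 4y_n, y_{n+1} = 2x_n + 3y_n, and set a_n = x_n + (3y_n + 3)/2 and b_n = (y_n + 3)/2. Then for all n, a_n and b_n are positive integers, a_n + b_n is odd, and a_n + b_n ≥ 19. -/
import Mathlib

/-- With xₙ, yₙ as in the recurrence, aₙ = xₙ + (3yₙ + 3)/2 and bₙ = (yₙ + 3)/2
are positive integers, aₙ + bₙ is odd, and aₙ + bₙ ≥ 19. -/
theorem stmt11 (x y : ℕ → ℤ) (hx0 : x 0 = 2) (hy0 : y 0 = 7)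
    (hx : ∀ n, x (n + 1) = 3 * x n + 4 * y n)
    (hy : ∀ n, y (n + 1) = 2 * x n + 3 * y n) :
    ∀ n, ∃ a b : ℤ, 2 * a = 2 * x n + 3 * y n + 3 ∧ 2 * b = y n + 3 ∧
      0 < a ∧ 0 < b ∧ Odd (a + b) ∧ 19 ≤ a + b := by
  have key : ∀ n, 2 ≤ x n ∧ 7 ≤ y n ∧ Even (x n) ∧ Odd (y n) := by
    intro n
    induction n with
    | zero => refine ⟨by omega, by omega, ⟨1, by omega⟩, ⟨3, by omega⟩⟩
    | succ m ih =>
      obtain ⟨h1, h2, ⟨u, hu⟩, ⟨v, hv⟩⟩ := ih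
      rw [hx m, hy m]
      exact ⟨by omega, by omega, ⟨3 * u + 2 * y m, by omega⟩, ⟨x m + 3 * v + 1, by omega⟩⟩
  intro n
  obtain ⟨h1, h2, ⟨u, hu⟩, ⟨v, hv⟩⟩ := key n
  refine ⟨x n + 3 * v + 3, v + 2, by omega, by omega, by omega, by omega,
    ⟨u + 2 * v + 2, by omega⟩, by omega⟩
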